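/- Let Γ be a finite group, m ≥ 1 an integer, and σ an automorphism of Γ with σ^{2m} = id_Γ. Let π : Γ → GL(V) be an irreducible finite-dimensional complex representation with character ξ, and let S : V → V be a linear automorphism such that S ∘ π(g) ∘ S⁻¹ = π(σ²(g)) for all g ∈ Γ and S^m = id_V. Set c = |Γ|⁻¹ · Σ_{g∈Γ} Tr(π(g·σ(g)) ∘ S). If ξ∘σ equals the complex conjugate character ξ̄ (i.e. ξ(σ(g)) = conj(ξ(g)) for all g), then c^{2m} = 1, so c is a nonzero 2m-th root of unity; otherwise c = 0. -/

import Mathlib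

open Matrix LinearMap Finset Polynomial

section TFSAux
variable {ι : Type*} [Fintype ι] [DecidableEq ι]


omit [DecidableEq ι] in
lemma stdBasis_repr' (y : Matrix ι ι ℂ) (p : ι × ι) :
    (Matrix.stdBasis ℂ ι ι).repr y p = y p.1 p.2 := by
  simp [Matrix.stdBasis, Pi.basis_repr]

lemma trace_endo (f : Matrix ι ι ℂ →ₗ[ℂ] Matrix ι ι ℂ) :
    LinearMap.trace ℂ _ f = ∑ i : ι, ∑ j : ι, f (Matrix.single i j 1) i j := by
  rw [LinearMap.trace_eq_matrix_trace ℂ (Matrix.stdBasis ℂ ι ι) f, Matrix.trace,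
    ← Fintype.sum_prod_type']
  refine Finset.sum_congr rfl fun p _ => ?_
  rw [Matrix.diag, LinearMap.toMatrix_apply, stdBasis_repr', Matrix.stdBasis_eq_single]

lemma trace_AXB (A B : Matrix ι ι ℂ) (f : Matrix ι ι ℂ →ₗ[ℂ] Matrix ι ι ℂ)
    (hf : ∀ X, f X = A * X * B) :
    LinearMap.trace ℂ _ f = A.trace * B.trace := by
  rw [trace_endo]
  have key : ∀ i j : ι, (A * Matrix.single i j (1:ℂ) * B) i j = A i i * B j j := by
    intro i j
    rw [Matrix.mul_apply, Finset.sum_eq_single j]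
    · rw [Matrix.mul_single_apply_same, mul_one]
    · intro l _ hl; rw [Matrix.mul_single_apply_of_ne _ _ _ _ _ hl, zero_mul]
    · intro h; exact absurd (Finset.mem_univ j) h
  simp only [hf, key]
  rw [Matrix.trace, Matrix.trace, Finset.sum_mul_sum]
  rfl

lemma trace_AXtB (A B : Matrix ι ι ℂ) (f : Matrix ι ι ℂ →ₗ[ℂ] Matrix ι ι ℂ)
    (hf : ∀ X, f X = A * Xᵀ * B) :
    LinearMap.trace ℂ _ f = (A * Bᵀ).trace := by
  rw [trace_endo]
  have ht : ∀ i j : ι, (Matrix.single i j (1:ℂ))ᵀ = Matrix.single j i 1 := by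
    intro i j; ext a b; simp [Matrix.single, and_comm]
  have key : ∀ i j : ι, (A * (Matrix.single i j (1:ℂ))ᵀ * B) i j = A i j * B i j := by
    intro i j
    rw [ht, Matrix.mul_apply, Finset.sum_eq_single i]
    · rw [Matrix.mul_single_apply_same, mul_one]
    · intro l _ hl; rw [Matrix.mul_single_apply_of_ne _ _ _ _ _ hl, zero_mul]
    · intro h; exact absurd (Finset.mem_univ i) h
  simp only [hf, key]
  rw [Matrix.trace]
  refine Finset.sum_congr rfl fun i _ => ?_
  rw [Matrix.diag, Matrix.mul_apply]
  exact Finset.sum_congr rfl fun j _ => rfl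

lemma trace_rankOne (Y : Matrix ι ι ℂ) (ψ : Matrix ι ι ℂ →ₗ[ℂ] ℂ)
    (f : Matrix ι ι ℂ →ₗ[ℂ] Matrix ι ι ℂ) (hf : ∀ X, f X = ψ X • Y) :
    LinearMap.trace ℂ _ f = ψ Y := by
  rw [trace_endo]
  simp only [hf, Matrix.smul_apply, smul_eq_mul]
  have : ∀ i j : ι, ψ (Matrix.single i j 1) * Y i j = ψ (Y i j • Matrix.single i j 1) := by
    intro i j; rw [_root_.map_smul, smul_eq_mul, mul_comm]
  simp only [this, ← map_sum]
  have h2 : ∀ i j : ι, (Y i j : ℂ) • Matrix.single i j (1:ℂ) = Matrix.single i j (Y i j) := by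
    intro i j; rw [Matrix.smul_single, smul_eq_mul, mul_one]
  simp only [h2]
  congr 1
  exact (Matrix.matrix_eq_sum_single Y).symm



lemma charpoly_eval' (A : Matrix ι ι ℂ) (x : ℂ) :
    A.charpoly.eval x = (x • (1 : Matrix ι ι ℂ) - A).det := by
  rw [Matrix.charpoly, ← Polynomial.coe_evalRingHom, RingHom.map_det]
  congr 1
  ext i j
  by_cases h : i = j
  · subst h; simp [Matrix.charmatrix_apply_eq, Matrix.one_apply]
  · simp [Matrix.charmatrix_apply_ne _ _ _ h, Matrix.one_apply, h]

lemma root_pow_eq_one' (A : Matrix ι ι ℂ) (k : ℕ) (hk : 0 < k) (hA : A ^ k = 1)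
    {μ : ℂ} (hμ : μ ∈ A.charpoly.roots) : μ ^ k = 1 := by
  have hne : A.charpoly ≠ 0 := (Matrix.charpoly_monic A).ne_zero
  have hroot : A.charpoly.eval μ = 0 := (Polynomial.mem_roots hne).mp hμ
  rw [charpoly_eval'] at hroot
  obtain ⟨v, hv0, hv⟩ := (Matrix.exists_mulVec_eq_zero_iff).mpr hroot
  have hAv : A *ᵥ v = μ • v := by
    have := hv
    rw [Matrix.sub_mulVec, sub_eq_zero] at this
    rw [← this, Matrix.smul_mulVec, Matrix.one_mulVec]
  have hpow : ∀ j : ℕ, (A ^ j) *ᵥ v = μ ^ j • v := by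
    intro j
    induction j with
    | zero => simp [Matrix.one_mulVec]
    | succ n ih =>
      rw [pow_succ', pow_succ', ← Matrix.mulVec_mulVec, ih, Matrix.mulVec_smul, hAv,
        smul_smul, mul_comm]
  have := hpow k
  rw [hA, Matrix.one_mulVec] at this
  have h2 : (μ ^ k - 1) • v = 0 := by rw [sub_smul, one_smul, ← this, sub_self]
  rcases smul_eq_zero.mp h2 with h | h
  · exact sub_eq_zero.mp h
  · exact absurd h hv0

lemma conj_of_pow_eq_one {μ : ℂ} {k : ℕ} (hk : 0 < k) (h : μ ^ k = 1) :
    (starRingEnd ℂ) μ = μ⁻¹ := by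
  have habs : ‖μ‖ = 1 := by
    have h1 : ‖μ‖ ^ k = 1 := by rw [← norm_pow, h]; simp
    have h0 : 0 ≤ ‖μ‖ := norm_nonneg _
    rcases lt_trichotomy ‖μ‖ 1 with hlt | heq | hgt
    · exact absurd h1 (by nlinarith [pow_lt_one₀ h0 hlt hk.ne'])
    · exact heq
    · exact absurd h1 (by nlinarith [one_lt_pow₀ hgt hk.ne'])
  have hmul : μ * (starRingEnd ℂ) μ = 1 := by
    rw [Complex.mul_conj, Complex.normSq_eq_norm_sq, habs]; norm_num
  exact (inv_eq_of_mul_eq_one_right hmul).symm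

lemma trace_inv_conj (A B : Matrix ι ι ℂ) (k : ℕ) (hk : 0 < k) (hA : A ^ k = 1)
    (hB : A * B = 1) : B.trace = (starRingEnd ℂ) A.trace := by
  have hdetu : IsUnit A.det := isUnit_iff_exists_inv.mpr ⟨B.det, by rw [← Matrix.det_mul, hB, Matrix.det_one]⟩
  have hdet0 : A.det ≠ 0 := hdetu.ne_zero
  have hBinv : B = A⁻¹ := (Matrix.inv_eq_right_inv hB).symm
  set R := A.charpoly.roots with hR
  have hsplit : A.charpoly.Splits := IsAlgClosed.splits _
  have hcard : Multiset.card R = Fintype.card ι := by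
    rw [hR, ← Matrix.charpoly_natDegree_eq_dim A]
    exact Polynomial.splits_iff_card_roots.mp hsplit
  have hroots1 : ∀ μ ∈ R, μ ^ k = 1 := fun μ hμ => root_pow_eq_one' A k hk hA hμ
  have hroots0 : ∀ μ ∈ R, μ ≠ 0 := by
    intro μ hμ h0
    have := hroots1 μ hμ
    rw [h0, zero_pow hk.ne'] at this
    exact zero_ne_one this
  have hkey : (A⁻¹).charpoly = (R.map (fun μ => X - C μ⁻¹)).prod := by
    apply Polynomial.eq_of_infinite_eval_eq
    have hsub : {x : ℂ | x ≠ 0} ⊆ {x : ℂ | Polynomial.eval x (A⁻¹).charpoly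
        = Polynomial.eval x (R.map (fun μ => X - C μ⁻¹)).prod} := by
      intro x hx
      have hx0 : x ≠ 0 := hx
      apply mul_right_cancel₀ hdet0
      have lhs : Polynomial.eval x (A⁻¹).charpoly * A.det
          = ((R.map (fun μ => x * μ - 1)).prod) := by
        rw [charpoly_eval', ← Matrix.det_mul]
        have hfact : (x • (1 : Matrix ι ι ℂ) - A⁻¹) * A = x • A - 1 := by
          rw [Matrix.sub_mul, Matrix.smul_mul, Matrix.one_mul, Matrix.nonsing_inv_mul A hdetu]
        rw [hfact]
        have hfact2 : x • A - (1 : Matrix ι ι ℂ) = (-x) • (x⁻¹ • (1 : Matrix ι ι ℂ) - A) := by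
          rw [smul_sub, smul_smul, neg_mul, mul_inv_cancel₀ hx0]
          simp only [neg_smul, one_smul]
          abel
        rw [hfact2, Matrix.det_smul, ← charpoly_eval',
          hsplit.eq_prod_roots_of_monic (Matrix.charpoly_monic A)]
        rw [Polynomial.eval_multiset_prod, Multiset.map_map, ← hcard,
          ← Multiset.prod_replicate, ← Multiset.map_const', ← Multiset.prod_map_mul]
        refine congrArg Multiset.prod (Multiset.map_congr rfl fun μ hμ => ?_)
        simp only [Function.comp_apply, Polynomial.eval_sub, Polynomial.eval_X,
          Polynomial.eval_C]
        field_simp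
        ring
      have rhs : Polynomial.eval x ((R.map (fun μ => X - C μ⁻¹)).prod) * A.det
          = ((R.map (fun μ => x * μ - 1)).prod) := by
        rw [Matrix.det_eq_prod_roots_charpoly, Polynomial.eval_multiset_prod,
          Multiset.map_map]
        have hid : (A.charpoly.roots).prod = ((A.charpoly.roots).map _root_.id).prod := by
          rw [Multiset.map_id]
        rw [hid, ← Multiset.prod_map_mul]
        refine congrArg Multiset.prod (Multiset.map_congr rfl fun μ hμ => ?_)
        simp only [Function.comp_apply, Polynomial.eval_sub, Polynomial.eval_X,
          Polynomial.eval_C]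
        have := hroots0 μ hμ
        field_simp
        simp only [id_eq]
        ring
      rw [lhs, rhs]
    exact Set.Infinite.mono hsub (Set.Finite.infinite_compl (Set.finite_singleton 0))
  rw [hBinv, Matrix.trace_eq_sum_roots_charpoly, hkey]
  have : ((R.map fun μ => X - C μ⁻¹).prod).roots = R.map (fun μ => μ⁻¹) := by
    have hmm : (R.map fun μ => X - C μ⁻¹) = ((R.map fun μ => μ⁻¹).map fun a => X - C a) := by
      rw [Multiset.map_map]; rfl
    rw [hmm]
    exact Polynomial.roots_multiset_prod_X_sub_C _
  rw [this, Matrix.trace_eq_sum_roots_charpoly, ← hR, map_multiset_sum]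
  exact congrArg Multiset.sum (Multiset.map_congr rfl fun μ hμ =>
    (conj_of_pow_eq_one hk (hroots1 μ hμ)).symm)

theorem aux_main {Γ : Type*} [Group Γ] [Fintype Γ] [Nonempty ι]
    (m : ℕ) (hm : 1 ≤ m) (σ : MulAut Γ)
    (P : Γ →* Matrix ι ι ℂ)
    (hinv : ∀ X : Matrix ι ι ℂ, (∀ g, P g * X * (P (σ g))ᵀ = X) → X ≠ 0 → IsUnit X)
    (hscalar : ∀ Z : Matrix ι ι ℂ, (∀ g, P g * Z = Z * P g) →
      ∃ a : ℂ, Z = a • (1 : Matrix ι ι ℂ))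
    (Sm : Matrix ι ι ℂ) (hSmul : ∀ g, Sm * P g = P (σ (σ g)) * Sm) (hSmm : Sm ^ m = 1)
    (c : ℂ)
    (hc : c = (Fintype.card Γ : ℂ)⁻¹ * ∑ g : Γ, (P g * P (σ g) * Sm).trace) :
    ((∀ g, (P (σ g)).trace = (starRingEnd ℂ) ((P g).trace)) → c ^ (2*m) = 1 ∧ c ≠ 0) ∧
    (¬ (∀ g, (P (σ g)).trace = (starRingEnd ℂ) ((P g).trace)) → c = 0) := by
  classical
  set card : ℂ := (Fintype.card Γ : ℂ) with hcard_def
  have hcard0 : card ≠ 0 := Nat.cast_ne_zero.mpr Fintype.card_ne_zero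
  -- the representation ρ on W and the twisting operator F
  set ρ : Γ → (Matrix ι ι ℂ →ₗ[ℂ] Matrix ι ι ℂ) := fun g =>
    LinearMap.mulRight ℂ ((P (σ g))ᵀ) ∘ₗ LinearMap.mulLeft ℂ (P g) with hρdef
  have hρ : ∀ g (X : Matrix ι ι ℂ), ρ g X = P g * X * (P (σ g))ᵀ := fun g X => rfl
  set F : Matrix ι ι ℂ →ₗ[ℂ] Matrix ι ι ℂ :=
    LinearMap.mulRight ℂ (Smᵀ) ∘ₗ (Matrix.transposeLinearEquiv ι ι ℂ ℂ).toLinearMap with hFdef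
  have hF : ∀ X : Matrix ι ι ℂ, F X = Xᵀ * Smᵀ := fun X => rfl
  set Q : Matrix ι ι ℂ →ₗ[ℂ] Matrix ι ι ℂ := card⁻¹ • ∑ g : Γ, ρ g with hQdef
  have hQ : ∀ X : Matrix ι ι ℂ, Q X = card⁻¹ • ∑ g : Γ, P g * X * (P (σ g))ᵀ := by
    intro X
    rw [hQdef, LinearMap.smul_apply, LinearMap.sum_apply]
    congr 1
  -- (K1) ρ is multiplicative
  have hK1 : ∀ g h (X : Matrix ι ι ℂ), ρ g (ρ h X) = ρ (g * h) X := by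
    intro g h X
    simp only [hρ, _root_.map_mul, Matrix.transpose_mul, Matrix.mul_assoc]
  -- (K3) invariance
  have hρQ : ∀ h (X : Matrix ι ι ℂ), ρ h (Q X) = Q X := by
    intro h X
    rw [hQ, _root_.map_smul, _root_.map_sum]
    congr 1
    rw [← Equiv.sum_comp (Equiv.mulLeft h) (fun g => P g * X * (P (σ g))ᵀ)]
    refine Finset.sum_congr rfl fun g _ => ?_
    rw [← hρ, ← hρ, hK1, hρ]
    rfl
  have hQρ : ∀ h (X : Matrix ι ι ℂ), Q (ρ h X) = Q X := by
    intro h X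
    rw [hQ, hQ]
    congr 1
    rw [← Equiv.sum_comp (Equiv.mulRight h) (fun g => P g * X * (P (σ g))ᵀ)]
    refine Finset.sum_congr rfl fun g _ => ?_
    rw [← hρ, ← hρ, hK1, hρ]
    rfl
  have hQQ : ∀ X : Matrix ι ι ℂ, Q (Q X) = Q X := by
    intro X
    conv_lhs => rw [hQ X, _root_.map_smul, _root_.map_sum]
    have : ∀ g : Γ, Q (P g * X * (P (σ g))ᵀ) = Q X := fun g => hQρ g X
    simp only [← hρ]
    simp only [hQρ]
    rw [Finset.sum_const, Finset.card_univ, ← Nat.cast_smul_eq_nsmul ℂ, smul_smul,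
      ← hcard_def, inv_mul_cancel₀ hcard0, one_smul]
  -- (K2)
  have hK2 : ∀ g (X : Matrix ι ι ℂ), F (ρ g X) = ρ (σ g) (F X) := by
    intro g X
    rw [hρ, hF, hρ, hF]
    rw [Matrix.transpose_mul, Matrix.transpose_mul, Matrix.transpose_transpose]
    rw [Matrix.mul_assoc, Matrix.mul_assoc, Matrix.mul_assoc, Matrix.mul_assoc]
    congr 2
    rw [← Matrix.transpose_mul, ← Matrix.transpose_mul, hSmul]
  -- (K4)
  have hFQ : ∀ X : Matrix ι ι ℂ, F (Q X) = Q (F X) := by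
    intro X
    rw [hQ, _root_.map_smul, _root_.map_sum, hQ]
    congr 1
    have hterm : ∀ g, F (P g * X * (P (σ g))ᵀ) = P (σ g) * F X * (P (σ (σ g)))ᵀ := by
      intro g
      have h7 := hK2 g X
      rw [hρ, hρ] at h7
      exact h7
    have hsum := Equiv.sum_comp σ.toEquiv (fun h => P h * F X * (P (σ h))ᵀ)
    rw [← hsum]
    exact Finset.sum_congr rfl fun g _ => hterm g
  -- (K5) : F iterated 2m times is the identity
  have hF2 : ∀ X : Matrix ι ι ℂ, F (F X) = Sm * X * Smᵀ := by
    intro X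
    rw [hF, hF, Matrix.transpose_mul, Matrix.transpose_transpose, Matrix.mul_assoc,
      Matrix.transpose_transpose, Matrix.mul_assoc]
  have hiter : ∀ (j : ℕ) (X : Matrix ι ι ℂ), (⇑F)^[2*j] X = Sm ^ j * X * (Smᵀ) ^ j := by
    intro j
    induction j with
    | zero => intro X; simp
    | succ n ih =>
      intro X
      have h2 : 2 * (n + 1) = 2 * n + 2 := by ring
      have hstep : (⇑F)^[2] X = Sm * X * Smᵀ := by
        have h8 : (⇑F)^[2] X = F (F X) := rfl
        rw [h8, hF2]
      rw [h2, Function.iterate_add_apply, hstep, ih, pow_succ Sm n, pow_succ' Smᵀ n]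
      simp only [Matrix.mul_assoc]
  have hF2m : ∀ X : Matrix ι ι ℂ, (⇑F)^[2*m] X = X := by
    intro X
    rw [hiter m X, hSmm, ← Matrix.transpose_pow, hSmm, Matrix.transpose_one,
      Matrix.one_mul, Matrix.mul_one]
  -- trace identities
  have hQF_eq : Q ∘ₗ F = card⁻¹ • ∑ g : Γ, (ρ g ∘ₗ F) := by
    refine LinearMap.ext fun X => ?_
    rw [LinearMap.comp_apply, hQ, LinearMap.smul_apply, LinearMap.sum_apply]
    congr 1
  have htrace_c : c = LinearMap.trace ℂ (Matrix ι ι ℂ) (Q ∘ₗ F) := by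
    rw [hQF_eq, _root_.map_smul, _root_.map_sum, hc, smul_eq_mul]
    congr 1
    refine Finset.sum_congr rfl fun g _ => ?_
    rw [trace_AXtB (P g) (Smᵀ * (P (σ g))ᵀ) (ρ g ∘ₗ F) (fun X => by
      simp only [LinearMap.comp_apply, hρ, hF, Matrix.mul_assoc])]
    rw [Matrix.transpose_mul, Matrix.transpose_transpose, Matrix.transpose_transpose,
      Matrix.mul_assoc]
  have htrace_Q : LinearMap.trace ℂ (Matrix ι ι ℂ) Q
      = card⁻¹ * ∑ g : Γ, (P g).trace * (P (σ g)).trace := by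
    rw [hQdef, _root_.map_smul, _root_.map_sum, smul_eq_mul]
    congr 1
    refine Finset.sum_congr rfl fun g _ => ?_
    rw [trace_AXB (P g) ((P (σ g))ᵀ) (ρ g) (hρ g), Matrix.trace_transpose]
  by_cases hQ0 : Q = 0
  · have hc0 : c = 0 := by rw [htrace_c, hQ0, LinearMap.zero_comp, _root_.map_zero]
    constructor
    · intro hyp
      exfalso
      have h1 : LinearMap.trace ℂ (Matrix ι ι ℂ) Q = 0 := by rw [hQ0, _root_.map_zero]
      rw [htrace_Q] at h1
      have h2 : ∑ g : Γ, (P g).trace * (P (σ g)).trace = 0 := by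
        rcases mul_eq_zero.mp h1 with h | h
        · exact absurd h (inv_ne_zero hcard0)
        · exact h
      have h3 : ∀ g : Γ, (P g).trace * (P (σ g)).trace
          = (Complex.normSq ((P g).trace) : ℝ) := by
        intro g
        rw [hyp g, Complex.mul_conj]
      rw [Finset.sum_congr rfl (fun g _ => h3 g)] at h2
      rw [← Complex.ofReal_sum] at h2
      have h4 : ∑ g : Γ, Complex.normSq ((P g).trace) = 0 := by
        exact_mod_cast h2
      have h5 : Complex.normSq ((P 1).trace) = 0 := by
        have := (Finset.sum_eq_zero_iff_of_nonneg
          (fun g _ => Complex.normSq_nonneg ((P g).trace))).mp h4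
        exact this 1 (Finset.mem_univ 1)
      have h6 : (P 1).trace = 0 := Complex.normSq_eq_zero.mp h5
      rw [_root_.map_one, Matrix.trace_one] at h6
      have : (Fintype.card ι : ℂ) ≠ 0 := Nat.cast_ne_zero.mpr Fintype.card_ne_zero
      exact this h6
    · intro _; exact hc0
  · -- Q ≠ 0 : there is a nonzero invariant element Y
    have hex : ∃ X₀ : Matrix ι ι ℂ, Q X₀ ≠ 0 := by
      by_contra h
      push_neg at h
      exact hQ0 (LinearMap.ext fun X => by rw [h X, LinearMap.zero_apply])
    obtain ⟨X₀, hY0⟩ := hex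
    set Y : Matrix ι ι ℂ := Q X₀ with hYdef
    have hYinv : ∀ g, P g * Y * (P (σ g))ᵀ = Y := by
      intro g
      have := hρQ g X₀
      rw [hρ] at this
      exact this
    have hYunit : IsUnit Y := hinv Y hYinv hY0
    obtain ⟨u, hu⟩ := hYunit
    set Y' : Matrix ι ι ℂ := ↑u⁻¹ with hY'def
    have hYY' : Y * Y' = 1 := by rw [← hu, hY'def, Units.mul_inv]
    have hY'Y : Y' * Y = 1 := by rw [← hu, hY'def, Units.inv_mul]
    -- the character identity holds
    have hyp : ∀ g, (P (σ g)).trace = (starRingEnd ℂ) ((P g).trace) := by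
      intro g
      have hPinv : P g * P g⁻¹ = 1 := by rw [← _root_.map_mul, mul_inv_cancel, _root_.map_one]
      have hPinv' : P g⁻¹ * P g = 1 := by rw [← _root_.map_mul, inv_mul_cancel, _root_.map_one]
      have h1 : (P (σ g))ᵀ = Y' * (P g⁻¹ * Y) := by
        have h2 : P g⁻¹ * (P g * Y * (P (σ g))ᵀ) = P g⁻¹ * Y := by rw [hYinv g]
        rw [← Matrix.mul_assoc, ← Matrix.mul_assoc, hPinv', Matrix.one_mul] at h2
        have h3 : Y' * (Y * (P (σ g))ᵀ) = Y' * (P g⁻¹ * Y) := by rw [h2]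
        rw [← Matrix.mul_assoc, hY'Y, Matrix.one_mul] at h3
        exact h3
      have h4 : (P (σ g)).trace = (P g⁻¹).trace := by
        rw [← Matrix.trace_transpose, h1, ← Matrix.mul_assoc, Matrix.trace_mul_cycle,
          hYY', Matrix.one_mul]
      rw [h4]
      exact trace_inv_conj (P g) (P g⁻¹) (Fintype.card Γ) Fintype.card_pos
        (by rw [← _root_.map_pow, pow_card_eq_one, _root_.map_one]) hPinv
    refine ⟨fun _ => ?_, fun hn => absurd hyp hn⟩
    -- invariant matrices satisfy P g * X = X * (P (σ g⁻¹))ᵀ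
    have hTg : ∀ (X : Matrix ι ι ℂ), (∀ g, P g * X * (P (σ g))ᵀ = X) →
        ∀ g, P g * X = X * (P (σ g⁻¹))ᵀ := by
      intro X hX g
      have hone : (P (σ g))ᵀ * (P (σ g⁻¹))ᵀ = 1 := by
        rw [← Matrix.transpose_mul, ← _root_.map_mul, ← _root_.map_mul σ,
          inv_mul_cancel, _root_.map_one, _root_.map_one, Matrix.transpose_one]
      calc P g * X = P g * X * ((P (σ g))ᵀ * (P (σ g⁻¹))ᵀ) := by
            rw [hone, Matrix.mul_one]
        _ = (P g * X * (P (σ g))ᵀ) * (P (σ g⁻¹))ᵀ := by rw [← Matrix.mul_assoc]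
        _ = X * (P (σ g⁻¹))ᵀ := by rw [hX g]
    have hY't : ∀ g, Y' * P g = (P (σ g⁻¹))ᵀ * Y' := by
      intro g
      have h6 : Y' * (P g * Y * Y') = Y' * (Y * (P (σ g⁻¹))ᵀ * Y') := by
        rw [hTg Y hYinv g]
      calc Y' * P g = Y' * (P g * (Y * Y')) := by rw [hYY', Matrix.mul_one]
        _ = Y' * (P g * Y * Y') := by rw [Matrix.mul_assoc]
        _ = Y' * (Y * (P (σ g⁻¹))ᵀ * Y') := h6
        _ = (Y' * Y) * ((P (σ g⁻¹))ᵀ * Y') := by simp only [Matrix.mul_assoc]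
        _ = (P (σ g⁻¹))ᵀ * Y' := by rw [hY'Y, Matrix.one_mul]
    -- every value of Q is a multiple of Y
    have hmult : ∀ Z : Matrix ι ι ℂ, ∃ a : ℂ, Q Z = a • Y := by
      intro Z
      have hXinv : ∀ g, P g * (Q Z) * (P (σ g))ᵀ = Q Z := by
        intro g
        have h9 := hρQ g Z
        rw [hρ] at h9
        exact h9
      have hcommQ : ∀ g, P g * ((Q Z) * Y') = ((Q Z) * Y') * P g := by
        intro g
        calc P g * ((Q Z) * Y') = (P g * (Q Z)) * Y' := by rw [Matrix.mul_assoc]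
          _ = ((Q Z) * (P (σ g⁻¹))ᵀ) * Y' := by rw [hTg (Q Z) hXinv g]
          _ = (Q Z) * ((P (σ g⁻¹))ᵀ * Y') := by rw [Matrix.mul_assoc]
          _ = (Q Z) * (Y' * P g) := by rw [← hY't g]
          _ = ((Q Z) * Y') * P g := by rw [Matrix.mul_assoc]
      obtain ⟨a, ha⟩ := hscalar ((Q Z) * Y') hcommQ
      refine ⟨a, ?_⟩
      calc Q Z = (Q Z) * (Y' * Y) := by rw [hY'Y, Matrix.mul_one]
        _ = ((Q Z) * Y') * Y := by rw [Matrix.mul_assoc]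
        _ = (a • (1 : Matrix ι ι ℂ)) * Y := by rw [ha]
        _ = a • Y := by rw [Matrix.smul_mul, Matrix.one_mul]
    -- the eigenvalue of F on the line spanned by Y
    obtain ⟨c', hc'⟩ := hmult (F X₀)
    have hFY : F Y = c' • Y := by
      rw [hYdef, hFQ X₀, hc']
    have hiterY : ∀ j : ℕ, (⇑F)^[j] Y = c' ^ j • Y := by
      intro j
      induction j with
      | zero => simp
      | succ n ih =>
        rw [Function.iterate_succ_apply', ih, _root_.map_smul, hFY, smul_smul, ← pow_succ]
    have h2m := hiterY (2*m)
    rw [hF2m Y] at h2m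
    have hc2m : c' ^ (2*m) = 1 := by
      have h0 : (c' ^ (2*m) - 1) • Y = 0 := by
        rw [sub_smul, one_smul, ← h2m, sub_self]
      rcases smul_eq_zero.mp h0 with h | h
      · exact sub_eq_zero.mp h
      · exact absurd h hY0
    have hQFc : Q ∘ₗ F = c' • Q := by
      refine LinearMap.ext fun Z => ?_
      have hL : (Q ∘ₗ F) Z = Q (F Z) := rfl
      have hR : (c' • Q) Z = c' • Q Z := rfl
      rw [hL, hR, ← hFQ Z]
      obtain ⟨a, ha⟩ := hmult Z
      rw [ha, _root_.map_smul, hFY, smul_smul, smul_smul, mul_comm]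
    -- a nonzero entry of Y gives a rank-one representation of Q
    have hentry : ∃ p : ι × ι, Y p.1 p.2 ≠ 0 := by
      by_contra h
      push_neg at h
      exact hY0 (Matrix.ext fun i j => (h (i, j)).trans rfl)
    obtain ⟨⟨i0, j0⟩, hij⟩ := hentry
    let entry : Matrix ι ι ℂ →ₗ[ℂ] ℂ :=
      { toFun := fun X => X i0 j0, map_add' := fun a b => rfl, map_smul' := fun r a => rfl }
    let ψ : Matrix ι ι ℂ →ₗ[ℂ] ℂ := (Y i0 j0)⁻¹ • (entry ∘ₗ Q)
    have hψ : ∀ Z, Q Z = ψ Z • Y := by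
      intro Z
      obtain ⟨a, ha⟩ := hmult Z
      have hψZ : ψ Z = a := by
        show (Y i0 j0)⁻¹ • ((entry ∘ₗ Q) Z) = a
        rw [LinearMap.comp_apply, ha]
        show (Y i0 j0)⁻¹ • ((a • Y) i0 j0) = a
        rw [Matrix.smul_apply, smul_eq_mul, smul_eq_mul]
        field_simp
      rw [hψZ, ha]
    have htrQ1 : LinearMap.trace ℂ (Matrix ι ι ℂ) Q = 1 := by
      rw [trace_rankOne Y ψ Q hψ]
      have hQY : Q Y = Y := by rw [hYdef, hQQ]
      have hψY : ψ Y • Y = Y := by rw [← hψ Y, hQY]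
      have h0 : (ψ Y - 1) • Y = 0 := by rw [sub_smul, one_smul, hψY, sub_self]
      rcases smul_eq_zero.mp h0 with h | h
      · exact sub_eq_zero.mp h
      · exact absurd h hY0
    have hcc' : c = c' := by
      rw [htrace_c, hQFc, _root_.map_smul, htrQ1, smul_eq_mul, mul_one]
    refine ⟨by rw [hcc']; exact hc2m, ?_⟩
    intro h0
    rw [hcc'] at h0
    rw [h0, zero_pow (by omega : 2*m ≠ 0)] at hc2m
    exact zero_ne_one hc2m

end TFSAux

/-- Corollary 1.16(i) / Theorem 1.14(ii), finite-group content: the twisted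
Frobenius–Schur indicator `c = c_2^{(m)}(ξ̃)` is a `2m`-th root of unity if
`ξ ∘ σ = ξ̄`, and is `0` otherwise. -/
theorem stmt1 {Γ : Type*} [Group Γ] [Fintype Γ]
    {V : Type*} [AddCommGroup V] [Module ℂ V] [FiniteDimensional ℂ V] [Nontrivial V]
    (m : ℕ) (hm : 1 ≤ m)
    (σ : MulAut Γ) (hσ : σ ^ (2 * m) = 1)
    (π : Γ →* (V ≃ₗ[ℂ] V))
    (hirr : ∀ U : Submodule ℂ V, (∀ g : Γ, ∀ v ∈ U, π g v ∈ U) → U = ⊥ ∨ U = ⊤)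
    (ξ : Γ → ℂ) (hξ : ∀ g, ξ g = LinearMap.trace ℂ V (π g).toLinearMap)
    (S : V ≃ₗ[ℂ] V)
    (hS : ∀ (g : Γ) (v : V), S (π g v) = π ((σ ^ 2) g) (S v))
    (hSm : S ^ m = 1)
    (c : ℂ)
    (hc : c = (Fintype.card Γ : ℂ)⁻¹ * ∑ g : Γ,
      LinearMap.trace ℂ V ((π (g * σ g)).toLinearMap ∘ₗ S.toLinearMap)) :
    ((∀ g, ξ (σ g) = starRingEnd ℂ (ξ g)) → c ^ (2 * m) = 1 ∧ c ≠ 0) ∧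
    (¬ (∀ g, ξ (σ g) = starRingEnd ℂ (ξ g)) → c = 0) := by
  classical
  have hn : 0 < Module.finrank ℂ V := Module.finrank_pos
  set n := Module.finrank ℂ V with hndef
  haveI : Nonempty (Fin n) := Fin.pos_iff_nonempty.mp hn
  set b : Module.Basis (Fin n) ℂ V := Module.finBasis ℂ V with hbdef
  -- the matrix representation
  have hmulP : ∀ g h : Γ, (π (g * h)).toLinearMap
      = (π g).toLinearMap ∘ₗ (π h).toLinearMap := by
    intro g h
    rw [_root_.map_mul]
    rfl
  set P : Γ →* Matrix (Fin n) (Fin n) ℂ :=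
    { toFun := fun g => LinearMap.toMatrix b b (π g).toLinearMap,
      map_one' := by
        show LinearMap.toMatrix b b (π 1).toLinearMap = 1
        rw [_root_.map_one π]
        exact LinearMap.toMatrix_id b,
      map_mul' := fun g h => by
        show LinearMap.toMatrix b b (π (g * h)).toLinearMap
          = LinearMap.toMatrix b b (π g).toLinearMap * LinearMap.toMatrix b b (π h).toLinearMap
        rw [hmulP, LinearMap.toMatrix_comp b b b] } with hPdef
  have hP : ∀ g, P g = LinearMap.toMatrix b b (π g).toLinearMap := fun g => rfl
  set Sm : Matrix (Fin n) (Fin n) ℂ := LinearMap.toMatrix b b S.toLinearMap with hSmdef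
  -- relation Sm * P g = P (σ (σ g)) * Sm
  have hSmul : ∀ g, Sm * P g = P (σ (σ g)) * Sm := by
    intro g
    have h1 : S.toLinearMap ∘ₗ (π g).toLinearMap
        = (π ((σ ^ 2) g)).toLinearMap ∘ₗ S.toLinearMap := by
      refine LinearMap.ext fun v => ?_
      exact hS g v
    have h2 : ((σ ^ 2) g) = σ (σ g) := by
      rw [pow_two]
      rfl
    rw [hP, hP, hSmdef, ← LinearMap.toMatrix_comp b b b, ← LinearMap.toMatrix_comp b b b,
      h1, h2]
  -- powers
  have hpowS : ∀ k : ℕ, ((S ^ k : V ≃ₗ[ℂ] V)).toLinearMap = (S.toLinearMap) ^ k := by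
    intro k
    induction k with
    | zero => rfl
    | succ j ih =>
      rw [pow_succ, pow_succ, ← ih]
      rfl
  have htoM_pow : ∀ (f : V →ₗ[ℂ] V) (k : ℕ),
      LinearMap.toMatrix b b (f ^ k) = (LinearMap.toMatrix b b f) ^ k := by
    intro f k
    induction k with
    | zero => exact LinearMap.toMatrix_id b
    | succ j ih =>
      rw [pow_succ, pow_succ, ← ih, ← LinearMap.toMatrix_comp b b b]
      rfl
  have hSmm : Sm ^ m = 1 := by
    rw [hSmdef, ← htoM_pow, ← hpowS, hSm]
    exact LinearMap.toMatrix_id b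
  -- trace translation
  have htr : ∀ f : V →ₗ[ℂ] V, LinearMap.trace ℂ V f = (LinearMap.toMatrix b b f).trace :=
    fun f => LinearMap.trace_eq_matrix_trace ℂ b f
  have hPtrace : ∀ g, (P g).trace = ξ g := by
    intro g
    rw [hP, hξ, htr]
  have hcM : c = (Fintype.card Γ : ℂ)⁻¹ * ∑ g : Γ, (P g * P (σ g) * Sm).trace := by
    rw [hc]
    congr 1
    refine Finset.sum_congr rfl fun g _ => ?_
    rw [htr, LinearMap.toMatrix_comp b b b, ← hSmdef, ← hP (g * σ g), _root_.map_mul]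
  -- Schur I : nonzero invariant matrices are invertible
  have hinvM : ∀ X : Matrix (Fin n) (Fin n) ℂ,
      (∀ g, P g * X * (P (σ g))ᵀ = X) → X ≠ 0 → IsUnit X := by
    intro X hX hX0
    set x : V →ₗ[ℂ] V := Matrix.toLin b b X with hxdef
    have hXg : ∀ g, P g * X = X * (P (σ g⁻¹))ᵀ := by
      intro g
      have hone : (P (σ g))ᵀ * (P (σ g⁻¹))ᵀ = 1 := by
        rw [← Matrix.transpose_mul, ← _root_.map_mul, ← _root_.map_mul σ,
          inv_mul_cancel, _root_.map_one, _root_.map_one, Matrix.transpose_one]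
      calc P g * X = P g * X * ((P (σ g))ᵀ * (P (σ g⁻¹))ᵀ) := by
            rw [hone, Matrix.mul_one]
        _ = (P g * X * (P (σ g))ᵀ) * (P (σ g⁻¹))ᵀ := by rw [← Matrix.mul_assoc]
        _ = X * (P (σ g⁻¹))ᵀ := by rw [hX g]
    have hrange : ∀ g : Γ, ∀ v ∈ LinearMap.range x, π g v ∈ LinearMap.range x := by
      intro g v hv
      obtain ⟨w, rfl⟩ := hv
      refine ⟨Matrix.toLin b b ((P (σ g⁻¹))ᵀ) w, ?_⟩
      have h1 := congrArg (fun M => Matrix.toLin b b M w) (hXg g)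
      simp only [Matrix.toLin_mul b b b] at h1
      rw [hP g, Matrix.toLin_toMatrix] at h1
      exact h1.symm
    rcases hirr (LinearMap.range x) hrange with hbot | htop
    · exfalso
      have hx0 : x = 0 := LinearMap.range_eq_bot.mp hbot
      apply hX0
      have : X = LinearMap.toMatrix b b x := (LinearMap.toMatrix_toLin b b X).symm
      rw [this, hx0, _root_.map_zero]
    · have hsurj : Function.Surjective x := LinearMap.range_eq_top.mp htop
      have hbij : Function.Bijective x :=
        ⟨LinearMap.injective_iff_surjective.mpr hsurj, hsurj⟩
      have hxu : IsUnit x := (Module.End.isUnit_iff x).mpr hbij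
      have h2 : IsUnit (LinearMap.toMatrixAlgEquiv b x) :=
        hxu.map (LinearMap.toMatrixAlgEquiv b)
      have h3 : (LinearMap.toMatrixAlgEquiv b) x = X := by
        rw [hxdef]
        show LinearMap.toMatrix b b (Matrix.toLin b b X) = X
        exact LinearMap.toMatrix_toLin b b X
      rwa [h3] at h2
  -- Schur II : commuting matrices are scalar
  have hscalarM : ∀ Z : Matrix (Fin n) (Fin n) ℂ, (∀ g, P g * Z = Z * P g) →
      ∃ a : ℂ, Z = a • (1 : Matrix (Fin n) (Fin n) ℂ) := by
    intro Z hZ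
    set z : V →ₗ[ℂ] V := Matrix.toLin b b Z with hzdef
    have hcomm : ∀ g : Γ, (π g).toLinearMap ∘ₗ z = z ∘ₗ (π g).toLinearMap := by
      intro g
      have h1 := congrArg (Matrix.toLin b b) (hZ g)
      simp only [Matrix.toLin_mul b b b] at h1
      rw [hP g, Matrix.toLin_toMatrix] at h1
      exact h1
    obtain ⟨μ, hμ⟩ := Module.End.exists_eigenvalue z
    have hES : ∀ g : Γ, ∀ v ∈ Module.End.eigenspace z μ, π g v ∈ Module.End.eigenspace z μ := by
      intro g v hv
      rw [Module.End.mem_eigenspace_iff] at hv ⊢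
      have h2 := LinearMap.ext_iff.mp (hcomm g) v
      simp only [LinearMap.comp_apply, LinearEquiv.coe_coe] at h2
      rw [← h2, hv, _root_.map_smul]
    rcases hirr (Module.End.eigenspace z μ) hES with hbot | htop
    · exact absurd hbot hμ
    · refine ⟨μ, ?_⟩
      have hz : z = μ • LinearMap.id := by
        refine LinearMap.ext fun v => ?_
        have hv : v ∈ Module.End.eigenspace z μ := htop ▸ Submodule.mem_top
        rw [Module.End.mem_eigenspace_iff] at hv
        simpa using hv
      have : Z = LinearMap.toMatrix b b z := (LinearMap.toMatrix_toLin b b Z).symm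
      rw [this, hz, _root_.map_smul, LinearMap.toMatrix_id]
  -- apply the matrix-level result
  have hmain := aux_main m hm σ P hinvM hscalarM Sm hSmul hSmm c hcM
  have hcond : (∀ g, (P (σ g)).trace = (starRingEnd ℂ) ((P g).trace))
      ↔ (∀ g, ξ (σ g) = starRingEnd ℂ (ξ g)) := by
    constructor
    · intro h g; rw [← hPtrace, ← hPtrace]; exact h g
    · intro h g; rw [hPtrace, hPtrace]; exact h g
  constructor
  · intro h
    exact hmain.1 (hcond.mpr h)
  · intro h
    exact hmain.2 (fun hh => h (hcond.mp hh))
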